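/- Let q be odd and n even. Then sk(n) = sym(n−1): the number of invertible n×n skew-symmetric matrices over F_q equals the number of invertible (n−1)×(n−1) symmetric matrices over F_q. -/

import Mathlib

open Matrix
set_option linter.unusedSectionVars false
set_option linter.unreachableTactic false
set_option linter.unusedTactic false
set_option maxHeartbeats 1600000

namespace Stmt10Aux


variable {F : Type} [Field F] [Fintype F]

noncomputable def scnt (ε : F) (ι : Type) [Fintype ι] [DecidableEq ι] : ℕ :=
  Nat.card {A : Matrix ι ι F // Aᵀ = ε • A ∧ IsUnit A}

lemma scnt_congr {ι ι' : Type} [Fintype ι] [DecidableEq ι] [Fintype ι'] [DecidableEq ι']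
    (ε : F) (e : ι ≃ ι') : scnt ε ι = scnt ε ι' := by
  apply Nat.card_congr
  refine Equiv.subtypeEquiv (reindex e e) fun A => ?_
  rw [transpose_reindex]
  constructor
  · rintro ⟨h1, h2⟩
    refine ⟨by rw [h1]; ext i j; simp, ?_⟩
    rw [isUnit_iff_isUnit_det] at h2 ⊢
    rwa [reindex_apply, det_submatrix_equiv_self]
  · rintro ⟨h1, h2⟩
    have h1' : reindex e e Aᵀ = reindex e e (ε • A) := by
      rw [h1]; ext i j; simp
    refine ⟨(reindex e e).injective h1', ?_⟩
    rw [isUnit_iff_isUnit_det] at h2 ⊢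
    rwa [reindex_apply, det_submatrix_equiv_self] at h2

lemma card_fiber_sum {α β : Type} [Finite α] [Fintype β] (p : α → Prop) (f : α → β) :
    Nat.card {a // p a} = ∑ b : β, Nat.card {a : α // p a ∧ f a = b} := by
  classical
  have e : {a // p a} ≃ Σ b : β, {a : α // p a ∧ f a = b} :=
    ((Equiv.sigmaFiberEquiv (fun x : {a // p a} => f x.1)).symm).trans
      (Equiv.sigmaCongrRight fun b => Equiv.subtypeSubtypeEquivSubtypeInter p (f · = b))
  rw [Nat.card_congr e]
  haveI : ∀ b, Fintype {a : α // p a ∧ f a = b} := fun b => Fintype.ofFinite _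
  simp [Nat.card_eq_fintype_card]

lemma scnt_zero (ε : F) : scnt ε (Fin 0) = 1 := by
  haveI : Subsingleton (Matrix (Fin 0) (Fin 0) F) := ⟨fun A B => by ext i; exact i.elim0⟩
  haveI : Unique {A : Matrix (Fin 0) (Fin 0) F // Aᵀ = ε • A ∧ IsUnit A} :=
    { default := ⟨1, Subsingleton.elim _ _, isUnit_one⟩
      uniq := fun A => Subtype.ext (Subsingleton.elim _ _) }
  exact Nat.card_unique

lemma scnt_one_fin_one : scnt (1 : F) (Fin 1) = Fintype.card F - 1 := by
  classical
  have e : {A : Matrix (Fin 1) (Fin 1) F // Aᵀ = (1:F) • A ∧ IsUnit A} ≃ {x : F // ¬ x = 0} := by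
    refine ⟨fun A => ⟨A.1 0 0, ?_⟩, fun x => ⟨Matrix.of fun _ _ => x.1, ?_, ?_⟩, ?_, ?_⟩
    · have := A.2.2
      rw [isUnit_iff_isUnit_det, Matrix.det_fin_one] at this
      exact (isUnit_iff_ne_zero.mp this)
    · ext i j; simp [Subsingleton.elim i j]
    · rw [isUnit_iff_isUnit_det, Matrix.det_fin_one]
      exact isUnit_iff_ne_zero.mpr x.2
    · intro A; apply Subtype.ext; ext i j
      simp [Subsingleton.elim i (0 : Fin 1), Subsingleton.elim j (0 : Fin 1)]
    · intro x; rfl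
  rw [scnt, Nat.card_congr e, Nat.card_eq_fintype_card, Fintype.card_subtype_compl,
    Fintype.card_subtype_eq]




-- existence of invertible G with G *ᵥ b = b'
lemma exists_isUnit_mulVec {ν : Type} [Fintype ν] [DecidableEq ν] {b b' : ν → F}
    (hb : b ≠ 0) (hb' : b' ≠ 0) :
    ∃ G Gi : Matrix ν ν F, G * Gi = 1 ∧ Gi * G = 1 ∧ G *ᵥ b = b' := by
  classical
  have hli : LinearIndepOn F id ({b} : Set (ν → F)) :=
    (linearIndepOn_singleton_iff F).mpr (by simpa using hb)
  have hli' : LinearIndepOn F id ({b'} : Set (ν → F)) :=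
    (linearIndepOn_singleton_iff F).mpr (by simpa using hb')
  let B : Module.Basis _ F (ν → F) := Module.Basis.extend hli
  let B' : Module.Basis _ F (ν → F) := Module.Basis.extend hli'
  have hmem : b ∈ hli.extend (Set.subset_univ _) := hli.subset_extend _ rfl
  have hmem' : b' ∈ hli'.extend (Set.subset_univ _) := hli'.subset_extend _ rfl
  let i0 : hli.extend (Set.subset_univ _) := ⟨b, hmem⟩
  let i1 : hli'.extend (Set.subset_univ _) := ⟨b', hmem'⟩
  let e0 := B.indexEquiv B'
  let e : _ ≃ _ := e0.trans (Equiv.swap (e0 i0) i1)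
  let f := B.equiv B' e
  have hf : f b = b' := by
    have h1 : B i0 = b := Module.Basis.extend_apply_self hli i0
    have h2 : B' i1 = b' := Module.Basis.extend_apply_self hli' i1
    calc f b = f (B i0) := by rw [h1]
    _ = B' (e i0) := B.equiv_apply i0 B' e
    _ = b' := by simp [e, Equiv.swap_apply_left, h2]
  refine ⟨LinearMap.toMatrix' (f : (ν → F) →ₗ[F] (ν → F)),
    LinearMap.toMatrix' (f.symm : (ν → F) →ₗ[F] (ν → F)), ?_, ?_, ?_⟩
  · rw [← LinearMap.toMatrix'_comp]
    simp
  · rw [← LinearMap.toMatrix'_comp]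
    simp
  · rw [← Matrix.toLin'_apply, Matrix.toLin'_toMatrix']
    exact hf




def fib (ε : F) {ν : Type} [Fintype ν] [DecidableEq ν] (a : F) (b : ν → F) : Type :=
  {A : Matrix (Fin 1 ⊕ ν) (Fin 1 ⊕ ν) F //
    (Aᵀ = ε • A ∧ IsUnit A) ∧ A (.inl 0) (.inl 0) = a ∧ ∀ j, A (.inl 0) (.inr j) = b j}

instance (ε : F) {ν : Type} [Fintype ν] [DecidableEq ν] (a : F) (b : ν → F) :
    Finite (fib ε a b) := by unfold fib; infer_instance

lemma fib_empty_of_zero (ε : F) {ν : Type} [Fintype ν] [DecidableEq ν] :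
    IsEmpty (fib ε 0 (0 : ν → F)) := by
  constructor
  rintro ⟨A, ⟨⟨hsym, hU⟩, ha, hb⟩⟩
  obtain ⟨u, hu⟩ := hU
  set B : Matrix (Fin 1 ⊕ ν) (Fin 1 ⊕ ν) F := (u⁻¹ : (Matrix (Fin 1 ⊕ ν) (Fin 1 ⊕ ν) F)ˣ).val with hB
  have hAB : A * B = 1 := by rw [← hu, hB]; exact u.mul_inv
  have h1 : (A * B) (.inl 0) (.inl 0) = (1 : Matrix (Fin 1 ⊕ ν) (Fin 1 ⊕ ν) F) (.inl 0) (.inl 0) := by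
    rw [hAB]
  rw [Matrix.one_apply_eq, Matrix.mul_apply, Fintype.sum_sum_type] at h1
  simp only [Fin.sum_univ_one] at h1
  rw [ha] at h1
  have hz : ∀ k, A (.inl 0) (.inr k) = 0 := fun k => by simpa using hb k
  rw [Finset.sum_eq_zero (fun k _ => by rw [hz k, zero_mul])] at h1
  simp at h1

lemma fib_skew_empty {ν : Type} [Fintype ν] [DecidableEq ν] (h2 : (2 : F) ≠ 0)
    (a : F) (ha : a ≠ 0) (b : ν → F) : IsEmpty (fib (-1 : F) a b) := by
  constructor
  rintro ⟨A, ⟨⟨hsym, hU⟩, haa, hb⟩⟩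
  have h := congrFun (congrFun hsym (.inl 0)) (.inl 0)
  rw [Matrix.transpose_apply, Matrix.smul_apply, haa, smul_eq_mul] at h
  apply ha
  have h2a : (2 : F) * a = 0 := by linear_combination h
  exact (mul_eq_zero.mp h2a).resolve_left h2

lemma conj_props (ε : F) {ν : Type} [Fintype ν] [DecidableEq ν]
    (H Hi : Matrix ν ν F) (hHHi : H * Hi = 1) (hHiH : Hi * H = 1)
    (a : F) (c : ν → F) (A : Matrix (Fin 1 ⊕ ν) (Fin 1 ⊕ ν) F)
    (hsym : Aᵀ = ε • A) (hU : IsUnit A)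
    (haa : A (.inl 0) (.inl 0) = a) (hb : ∀ j, A (.inl 0) (.inr j) = c j) :
    ((fromBlocks 1 0 0 H * A * (fromBlocks 1 0 0 H)ᵀ)ᵀ = ε • (fromBlocks 1 0 0 H * A * (fromBlocks 1 0 0 H)ᵀ)
      ∧ IsUnit (fromBlocks 1 0 0 H * A * (fromBlocks 1 0 0 H)ᵀ))
      ∧ (fromBlocks 1 0 0 H * A * (fromBlocks 1 0 0 H)ᵀ
          : Matrix (Fin 1 ⊕ ν) (Fin 1 ⊕ ν) F) (.inl 0) (.inl 0) = a
      ∧ ∀ j, (fromBlocks 1 0 0 H * A * (fromBlocks 1 0 0 H)ᵀ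
          : Matrix (Fin 1 ⊕ ν) (Fin 1 ⊕ ν) F) (.inl 0) (.inr j) = (H *ᵥ c) j := by
  set R : Matrix (Fin 1 ⊕ ν) (Fin 1 ⊕ ν) F := fromBlocks 1 0 0 H with hRdef
  have hRS : R * fromBlocks 1 0 0 Hi = 1 := by
    simp only [R, fromBlocks_multiply]
    rw [hHHi]; simp [fromBlocks_one]
  have hSR : fromBlocks 1 0 0 Hi * R = 1 := by
    simp only [R, fromBlocks_multiply]
    rw [hHiH]; simp [fromBlocks_one]
  have hRunit : IsUnit R := ⟨⟨R, _, hRS, hSR⟩, rfl⟩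
  have hRTunit : IsUnit Rᵀ := by
    rw [isUnit_iff_isUnit_det, det_transpose, ← isUnit_iff_isUnit_det]
    exact hRunit
  have hrow : ∀ t, (R * A) (.inl 0) t = A (.inl 0) t := by
    intro t
    rw [Matrix.mul_apply, Fintype.sum_sum_type]
    simp [R, fromBlocks]
  refine ⟨⟨?_, (hRunit.mul hU).mul hRTunit⟩, ?_, ?_⟩
  · rw [transpose_mul, transpose_mul, transpose_transpose, hsym, Matrix.smul_mul,
      Matrix.mul_smul, ← Matrix.mul_assoc]
  · rw [Matrix.mul_apply, Fintype.sum_sum_type]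
    simp only [Fin.sum_univ_one, hrow]
    simp [R, fromBlocks, transpose_apply, haa]
  · intro j
    rw [Matrix.mul_apply, Fintype.sum_sum_type]
    simp only [Fin.sum_univ_one, hrow]
    simp only [transpose_apply]
    have h1 : R (.inr j) (.inl 0) = 0 := by simp [R, fromBlocks]
    have h2 : ∀ k, R (.inr j) (.inr k) = H j k := fun k => by simp [R, fromBlocks]
    rw [h1]
    simp only [h2, hb, mulVec, dotProduct]
    simp [mul_comm]

lemma card_fib_transport (ε : F) {ν : Type} [Fintype ν] [DecidableEq ν] (a : F) (b : ν → F)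
    (G Gi : Matrix ν ν F) (hGGi : G * Gi = 1) (hGiG : Gi * G = 1) :
    Nat.card (fib ε a b) = Nat.card (fib ε a (G *ᵥ b)) := by
  apply Nat.card_congr
  let P : Matrix (Fin 1 ⊕ ν) (Fin 1 ⊕ ν) F := fromBlocks 1 0 0 G
  let Q : Matrix (Fin 1 ⊕ ν) (Fin 1 ⊕ ν) F := fromBlocks 1 0 0 Gi
  have hQP : Q * P = 1 := by
    simp only [P, Q, fromBlocks_multiply]
    rw [hGiG]; simp [fromBlocks_one]
  have hPQ : P * Q = 1 := by
    simp only [P, Q, fromBlocks_multiply]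
    rw [hGGi]; simp [fromBlocks_one]
  refine ⟨fun A => ⟨P * A.1 * Pᵀ, ?_⟩, fun A => ⟨Q * A.1 * Qᵀ, ?_⟩, ?_, ?_⟩
  · exact conj_props ε G Gi hGGi hGiG a b A.1 A.2.1.1 A.2.1.2 A.2.2.1 A.2.2.2
  · have h := conj_props ε Gi G hGiG hGGi a (G *ᵥ b) A.1 A.2.1.1 A.2.1.2 A.2.2.1 A.2.2.2
    rw [mulVec_mulVec, hGiG, one_mulVec] at h
    exact h
  · intro A
    apply Subtype.ext
    show Q * (P * A.1 * Pᵀ) * Qᵀ = A.1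
    calc Q * (P * A.1 * Pᵀ) * Qᵀ = (Q * P) * A.1 * (Pᵀ * Qᵀ) := by
          simp only [Matrix.mul_assoc]
    _ = (Q * P) * A.1 * (Q * P)ᵀ := by rw [transpose_mul]
    _ = A.1 := by rw [hQP]; simp
  · intro A
    apply Subtype.ext
    show P * (Q * A.1 * Qᵀ) * Pᵀ = A.1
    calc P * (Q * A.1 * Qᵀ) * Pᵀ = (P * Q) * A.1 * (Qᵀ * Pᵀ) := by
          simp only [Matrix.mul_assoc]
    _ = (P * Q) * A.1 * (P * Q)ᵀ := by rw [transpose_mul]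
    _ = A.1 := by rw [hPQ]; simp




variable {μ : Type} [Fintype μ] [DecidableEq μ]

def b0 : (Fin 1 ⊕ μ) → F := Sum.elim (fun _ => (1:F)) (fun _ => 0)

def Tm (ε x : F) : Matrix (Fin 1 ⊕ Fin 1) (Fin 1 ⊕ Fin 1) F :=
  Matrix.of fun s t => match s, t with
  | .inl _, .inl _ => 0
  | .inl _, .inr _ => 1
  | .inr _, .inl _ => ε
  | .inr _, .inr _ => x

def Tmi (ε x : F) : Matrix (Fin 1 ⊕ Fin 1) (Fin 1 ⊕ Fin 1) F :=
  Matrix.of fun s t => match s, t with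
  | .inl _, .inl _ => -(x*ε)
  | .inl _, .inr _ => ε
  | .inr _, .inl _ => 1
  | .inr _, .inr _ => 0

def Um (c : μ → F) : Matrix (Fin 1 ⊕ Fin 1) μ F :=
  Matrix.of fun s k => match s with
  | .inl _ => 0
  | .inr _ => c k

def Vm (ε : F) (c : μ → F) : Matrix μ (Fin 1 ⊕ Fin 1) F :=
  Matrix.of fun k t => match t with
  | .inl _ => 0
  | .inr _ => ε * c k

def mkM (ε x : F) (c : μ → F) (D : Matrix μ μ F) :
    Matrix (Fin 1 ⊕ (Fin 1 ⊕ μ)) (Fin 1 ⊕ (Fin 1 ⊕ μ)) F :=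
  (fromBlocks (Tm ε x) (Um c) (Vm ε c) D).submatrix
    (Equiv.sumAssoc (Fin 1) (Fin 1) μ).symm (Equiv.sumAssoc (Fin 1) (Fin 1) μ).symm

section entries
variable (ε x : F) (c : μ → F) (D : Matrix μ μ F)

example (i j : Fin 1) : mkM ε x c D (.inl i) (.inl j) = 0 := rfl
example (i j : Fin 1) : mkM ε x c D (.inl i) (.inr (.inl j)) = 1 := rfl
example (i : Fin 1) (k : μ) : mkM ε x c D (.inl i) (.inr (.inr k)) = 0 := rfl
example (i j : Fin 1) : mkM ε x c D (.inr (.inl i)) (.inl j) = ε := rfl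
example (i j : Fin 1) : mkM ε x c D (.inr (.inl i)) (.inr (.inl j)) = x := rfl
example (i : Fin 1) (k : μ) : mkM ε x c D (.inr (.inl i)) (.inr (.inr k)) = c k := rfl
example (i : Fin 1) (k : μ) : mkM ε x c D (.inr (.inr k)) (.inl i) = 0 := rfl
example (i : Fin 1) (k : μ) : mkM ε x c D (.inr (.inr k)) (.inr (.inl i)) = ε * c k := rfl
example (k l : μ) : mkM ε x c D (.inr (.inr k)) (.inr (.inr l)) = D k l := rfl
end entries

lemma Tm_mul_Tmi (ε x : F) (hε : ε * ε = 1) : Tm ε x * Tmi ε x = 1 := by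
  ext s t
  rcases s with s | s <;> rcases t with t | t
  all_goals try simp [Tm, Tmi, Matrix.mul_apply, Fintype.sum_sum_type, Fin.sum_univ_one,
      Matrix.one_apply, Subsingleton.elim s t]
  all_goals first
      | ring1
      | linear_combination x * hε
      | linear_combination (-x) * hε
      | linear_combination (1 + x) * hε
      | linear_combination hε
      | linear_combination -hε

lemma Tmi_mul_Tm (ε x : F) (hε : ε * ε = 1) : Tmi ε x * Tm ε x = 1 := by
  ext s t
  rcases s with s | s <;> rcases t with t | t
  all_goals try simp [Tm, Tmi, Matrix.mul_apply, Fintype.sum_sum_type, Fin.sum_univ_one,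
      Matrix.one_apply, Subsingleton.elim s t]
  all_goals first
      | ring1
      | linear_combination x * hε
      | linear_combination (-x) * hε
      | linear_combination (1 + x) * hε
      | linear_combination hε
      | linear_combination -hε

lemma mkM_isUnit_iff (ε x : F) (hε : ε * ε = 1) (c : μ → F) (D : Matrix μ μ F) :
    IsUnit (mkM ε x c D) ↔ IsUnit D := by
  classical
  rw [mkM, isUnit_iff_isUnit_det, det_submatrix_equiv_self, ← isUnit_iff_isUnit_det]
  letI : Invertible (Tm ε x) := ⟨Tmi ε x, Tmi_mul_Tm ε x hε, Tm_mul_Tmi ε x hε⟩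
  rw [isUnit_fromBlocks_iff_of_invertible₁₁]
  have hinv : ⅟(Tm ε x) = Tmi ε x := rfl
  have h0 : Vm ε c * Tmi ε x * Um c = 0 := by
    ext k l
    simp [Vm, Tmi, Um, Matrix.mul_apply, Fintype.sum_sum_type, Fin.sum_univ_one]
  rw [hinv, h0, sub_zero]

lemma mkM_symm (ε x : F) (hε : ε * ε = 1) (hx : ε * x = x) (c : μ → F) (D : Matrix μ μ F)
    (hD : Dᵀ = ε • D) : (mkM ε x c D)ᵀ = ε • mkM ε x c D := by
  have hDp : ∀ k l, D l k = ε * D k l := fun k l => by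
    have := congrFun (congrFun hD k) l
    simpa using this
  ext i j
  rcases i with i | i | k <;> rcases j with j | j | l
  all_goals try simp [mkM, Tm, Um, Vm, Matrix.transpose_apply, Matrix.smul_apply, smul_eq_mul,
      Matrix.submatrix_apply, Matrix.fromBlocks, Equiv.sumAssoc]
  all_goals first
      | rfl
      | ring1
      | exact hDp _ _
      | linear_combination hε
      | linear_combination -hε
      | linear_combination hx
      | linear_combination -hx
      | linear_combination (c l) * hε
      | linear_combination (c k) * hε
      | linear_combination (-(c l)) * hε
      | linear_combination (-(c k)) * hε

lemma hs_of_symm {ι : Type} (ε : F) (A : Matrix ι ι F) (hsym : Aᵀ = ε • A) :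
    ∀ i j, A j i = ε * A i j := fun i j => by
  simpa using congrFun (congrFun hsym i) j

lemma fib_eq_mkM (ε : F) (A : Matrix (Fin 1 ⊕ (Fin 1 ⊕ μ)) (Fin 1 ⊕ (Fin 1 ⊕ μ)) F)
    (hsym : Aᵀ = ε • A) (h00 : A (.inl 0) (.inl 0) = 0)
    (hrow : ∀ j, A (.inl 0) (.inr j) = b0 j) :
    A = mkM ε (A (.inr (.inl 0)) (.inr (.inl 0)))
      (fun k => A (.inr (.inl 0)) (.inr (.inr k)))
      (Matrix.of fun k l => A (.inr (.inr k)) (.inr (.inr l))) := by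
  have hs := hs_of_symm ε A hsym
  have hb1 : ∀ i : Fin 1, A (.inl 0) (.inr (.inl i)) = 1 := fun i => hrow (.inl i)
  have hb2 : ∀ k : μ, A (.inl 0) (.inr (.inr k)) = 0 := fun k => hrow (.inr k)
  ext i j
  rcases i with i | i | k <;> rcases j with j | j | l
  · obtain rfl : i = 0 := Subsingleton.elim _ _
    obtain rfl : j = 0 := Subsingleton.elim _ _
    rw [h00]; rfl
  · obtain rfl : i = 0 := Subsingleton.elim _ _
    obtain rfl : j = 0 := Subsingleton.elim _ _
    rw [hb1 0]; rfl
  · obtain rfl : i = 0 := Subsingleton.elim _ _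
    rw [hb2 l]; rfl
  · obtain rfl : i = 0 := Subsingleton.elim _ _
    obtain rfl : j = 0 := Subsingleton.elim _ _
    rw [hs (.inl 0) (.inr (.inl 0)), hb1 0, mul_one]; rfl
  · obtain rfl : i = 0 := Subsingleton.elim _ _
    obtain rfl : j = 0 := Subsingleton.elim _ _
    rfl
  · obtain rfl : i = 0 := Subsingleton.elim _ _
    rfl
  · obtain rfl : j = 0 := Subsingleton.elim _ _
    rw [hs (.inl 0) (.inr (.inr k)), hb2 k, mul_zero]; rfl
  · obtain rfl : j = 0 := Subsingleton.elim _ _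
    rw [hs (.inr (.inl 0)) (.inr (.inr k))]; rfl
  · rfl

lemma card_fib_canonical (ε : F) (hε : ε * ε = 1) :
    Nat.card (fib ε (0:F) (b0 : Fin 1 ⊕ μ → F)) =
      Nat.card {x : F // ε * x = x} * Nat.card (μ → F) * scnt ε μ := by
  classical
  have e : fib ε (0:F) (b0 : Fin 1 ⊕ μ → F) ≃
      {x : F // ε * x = x} × (μ → F) × {D : Matrix μ μ F // Dᵀ = ε • D ∧ IsUnit D} := by
    refine ⟨fun A => ⟨⟨A.1 (.inr (.inl 0)) (.inr (.inl 0)), ?_⟩,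
        fun k => A.1 (.inr (.inl 0)) (.inr (.inr k)),
        ⟨Matrix.of fun k l => A.1 (.inr (.inr k)) (.inr (.inr l)), ?_, ?_⟩⟩,
      fun t => ⟨mkM ε t.1.1 t.2.1 t.2.2.1, ⟨?_, ?_⟩, ?_, ?_⟩, ?_, ?_⟩
    · exact (hs_of_symm ε A.1 A.2.1.1 _ _).symm
    · ext k l
      exact hs_of_symm ε A.1 A.2.1.1 (.inr (.inr k)) (.inr (.inr l))
    · have hu := A.2.1.2
      rw [fib_eq_mkM ε A.1 A.2.1.1 A.2.2.1 A.2.2.2] at hu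
      exact (mkM_isUnit_iff ε _ hε _ _).mp hu
    · exact mkM_symm ε t.1.1 hε t.1.2 t.2.1 t.2.2.1 t.2.2.2.1
    · exact (mkM_isUnit_iff ε _ hε _ _).mpr t.2.2.2.2
    · rfl
    · rintro (j | j) <;> rfl
    · intro A
      exact Subtype.ext (fib_eq_mkM ε A.1 A.2.1.1 A.2.2.1 A.2.2.2).symm
    · rintro ⟨⟨x, hx⟩, c, ⟨D, hD⟩⟩
      refine Prod.ext rfl (Prod.ext rfl ?_)
      apply Subtype.ext
      ext k l
      rfl
  rw [Nat.card_congr e, Nat.card_prod, Nat.card_prod, mul_assoc]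
  rfl

section schur
variable {ν : Type} [Fintype ν] [DecidableEq ν]

def mkS (a : F) (b : ν → F) (S : Matrix ν ν F) : Matrix (Fin 1 ⊕ ν) (Fin 1 ⊕ ν) F :=
  fromBlocks (Matrix.of fun _ _ => a) (Matrix.of fun _ j => b j) (Matrix.of fun j _ => b j)
    (Matrix.of fun j k => S j k + a⁻¹ * b j * b k)

lemma mkS_isUnit_iff (a : F) (ha : a ≠ 0) (b : ν → F) (S : Matrix ν ν F) :
    IsUnit (mkS a b S) ↔ IsUnit S := by
  classical
  letI : Invertible (Matrix.of fun _ _ => a : Matrix (Fin 1) (Fin 1) F) := by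
    refine ⟨Matrix.of fun _ _ => a⁻¹, ?_, ?_⟩ <;>
      (ext i j; obtain rfl : i = 0 := Subsingleton.elim _ _;
       obtain rfl : j = 0 := Subsingleton.elim _ _;
       simp [Matrix.mul_apply, Fin.sum_univ_one, Matrix.one_apply, inv_mul_cancel₀ ha,
         mul_inv_cancel₀ ha])
  rw [mkS, isUnit_fromBlocks_iff_of_invertible₁₁]
  have h : (Matrix.of fun j k => S j k + a⁻¹ * b j * b k : Matrix ν ν F) -
      (Matrix.of fun j _ => b j : Matrix ν (Fin 1) F) *
        ⅟(Matrix.of fun _ _ => a : Matrix (Fin 1) (Fin 1) F) *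
        (Matrix.of fun _ j => b j : Matrix (Fin 1) ν F) = S := by
    ext j k
    simp [Matrix.mul_apply, Fin.sum_univ_one, Matrix.sub_apply]
    ring
  rw [h]

lemma mkS_symm (a : F) (b : ν → F) (S : Matrix ν ν F) (hS : Sᵀ = (1:F) • S) :
    (mkS a b S)ᵀ = (1:F) • mkS a b S := by
  have hSp := hs_of_symm (1:F) S hS
  ext i j
  rcases i with i | j' <;> rcases j with j | k
  · simp [mkS, Matrix.smul_apply]
  · simp [mkS, Matrix.smul_apply]
  · simp [mkS, Matrix.smul_apply]
  · show S k j' + a⁻¹ * b k * b j' = 1 * (S j' k + a⁻¹ * b j' * b k)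
    have := hSp j' k
    linear_combination this

lemma fib_eq_mkS (a : F) (b : ν → F) (A : Matrix (Fin 1 ⊕ ν) (Fin 1 ⊕ ν) F)
    (hsym : Aᵀ = (1:F) • A) (h00 : A (.inl 0) (.inl 0) = a)
    (hrow : ∀ j, A (.inl 0) (.inr j) = b j) :
    A = mkS a b (Matrix.of fun j k => A (.inr j) (.inr k) - a⁻¹ * b j * b k) := by
  have hs := hs_of_symm (1:F) A hsym
  ext i j
  rcases i with i | j' <;> rcases j with j | k
  · obtain rfl : i = 0 := Subsingleton.elim _ _
    obtain rfl : j = 0 := Subsingleton.elim _ _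
    rw [h00]; rfl
  · obtain rfl : i = 0 := Subsingleton.elim _ _
    rw [hrow k]; rfl
  · obtain rfl : j = 0 := Subsingleton.elim _ _
    rw [hs (.inl 0) (.inr j'), hrow j', one_mul]; rfl
  · show A (.inr j') (.inr k) = (A (.inr j') (.inr k) - a⁻¹ * b j' * b k) + a⁻¹ * b j' * b k
    ring

lemma card_fib_schur (a : F) (ha : a ≠ 0) (b : ν → F) :
    Nat.card (fib (1:F) a b) = scnt (1:F) ν := by
  apply Nat.card_congr
  refine ⟨fun A => ⟨Matrix.of fun j k => A.1 (.inr j) (.inr k) - a⁻¹ * b j * b k, ?_, ?_⟩,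
    fun S => ⟨mkS a b S.1, ⟨mkS_symm a b S.1 S.2.1, (mkS_isUnit_iff a ha b S.1).mpr S.2.2⟩,
      rfl, fun j => rfl⟩, ?_, ?_⟩
  · have hs := hs_of_symm (1:F) A.1 A.2.1.1
    ext j k
    show (A.1 (.inr k) (.inr j) - a⁻¹ * b k * b j) = 1 * (A.1 (.inr j) (.inr k) - a⁻¹ * b j * b k)
    linear_combination hs (.inr j) (.inr k)
  · have hu := A.2.1.2
    rw [fib_eq_mkS a b A.1 A.2.1.1 A.2.2.1 A.2.2.2] at hu
    exact (mkS_isUnit_iff a ha b _).mp hu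
  · intro A
    exact Subtype.ext (fib_eq_mkS a b A.1 A.2.1.1 A.2.2.1 A.2.2.2).symm
  · rintro ⟨S, hS⟩
    apply Subtype.ext
    ext j k
    show (S j k + a⁻¹ * b j * b k) - a⁻¹ * b j * b k = S j k
    ring

end schur


section assembly
variable {μ : Type} [Fintype μ] [DecidableEq μ]

lemma b0_ne : (b0 : Fin 1 ⊕ μ → F) ≠ 0 := fun h => one_ne_zero (congrFun h (Sum.inl 0))

lemma card_fib_zero_row (ε : F) (hε : ε * ε = 1) (b : (Fin 1 ⊕ μ) → F) (hb : b ≠ 0) :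
    Nat.card (fib ε (0:F) b) =
      Nat.card {x : F // ε * x = x} * Nat.card ((μ → F)) * scnt ε μ := by
  obtain ⟨G, Gi, h1, h2, h3⟩ := exists_isUnit_mulVec hb (b0_ne (μ := μ))
  rw [card_fib_transport ε 0 b G Gi h1 h2, h3, card_fib_canonical ε hε]

lemma card_split (ε : F) {ν : Type} [Fintype ν] [DecidableEq ν] :
    scnt ε (Fin 1 ⊕ ν) = ∑ p : F × (ν → F), Nat.card (fib ε p.1 p.2) := by
  classical
  rw [scnt, card_fiber_sum (fun A : Matrix (Fin 1 ⊕ ν) (Fin 1 ⊕ ν) F => Aᵀ = ε • A ∧ IsUnit A)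
    (fun A => (A (.inl 0) (.inl 0), fun j => A (.inl 0) (.inr j)))]
  refine Finset.sum_congr rfl fun p _ => Nat.card_congr (Equiv.subtypeEquivRight fun A => ?_)
  constructor
  · rintro ⟨hp, h3⟩
    obtain ⟨h4, h5⟩ := Prod.ext_iff.mp h3
    exact ⟨hp, h4, fun j => congrFun h5 j⟩
  · rintro ⟨hp, h3, h4⟩
    exact ⟨hp, Prod.ext_iff.mpr ⟨h3, funext h4⟩⟩

lemma sum_split_zero {β : Type} [Fintype β] (f : β → ℕ) (z : β) (X Y : ℕ)
    (h0 : f z = X) (h1 : ∀ b, b ≠ z → f b = Y) :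
    (∑ b : β, f b) = X + (Fintype.card β - 1) * Y := by
  classical
  rw [← Finset.add_sum_erase _ f (Finset.mem_univ z), h0]
  congr 1
  rw [Finset.sum_congr rfl (fun b hb => h1 b (Finset.ne_of_mem_erase hb)), Finset.sum_const,
    Finset.card_erase_of_mem (Finset.mem_univ _), Finset.card_univ, smul_eq_mul]

lemma skew_rec (h2 : (2:F) ≠ 0) :
    scnt (-1:F) (Fin 1 ⊕ (Fin 1 ⊕ μ)) =
      (Fintype.card F ^ (Fintype.card μ + 1) - 1) *
        (Fintype.card F ^ Fintype.card μ * scnt (-1:F) μ) := by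
  classical
  have hε : (-1:F) * (-1) = 1 := by ring
  haveI : Unique {x : F // (-1:F) * x = x} := by
    refine ⟨⟨⟨0, by ring⟩⟩, fun y => Subtype.ext ?_⟩
    have hy := y.2
    have h2y : (2:F) * y.1 = 0 := by linear_combination -hy
    have := (mul_eq_zero.mp h2y).resolve_left h2
    simpa using this
  have hcard1 : Nat.card {x : F // (-1:F) * x = x} = 1 := Nat.card_unique
  have hcardV : Fintype.card ((Fin 1 ⊕ μ) → F) = Fintype.card F ^ (Fintype.card μ + 1) := by
    rw [Fintype.card_fun, Fintype.card_sum, Fintype.card_fin, add_comm]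
  set K := Fintype.card F ^ Fintype.card μ * scnt (-1:F) μ with hK
  rw [card_split, Fintype.sum_prod_type]
  have hinner0 : (∑ b : (Fin 1 ⊕ μ) → F, Nat.card (fib (-1:F) (0:F) b)) =
      (Fintype.card F ^ (Fintype.card μ + 1) - 1) * K := by
    have := sum_split_zero (fun b : (Fin 1 ⊕ μ) → F => Nat.card (fib (-1:F) (0:F) b)) 0 0 K
      (by show Nat.card (fib (-1:F) (0:F) (0 : (Fin 1 ⊕ μ) → F)) = 0
          haveI := fib_empty_of_zero (-1:F) (ν := Fin 1 ⊕ μ); simp)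
      (fun b hb => by
        show Nat.card (fib (-1:F) (0:F) b) = K
        rw [card_fib_zero_row (-1:F) hε b hb, hcard1, one_mul, hK,
          Nat.card_eq_fintype_card, Fintype.card_fun])
    rw [this, zero_add, hcardV]
  have houter := sum_split_zero
    (fun a : F => ∑ b : (Fin 1 ⊕ μ) → F, Nat.card (fib (-1:F) a b)) 0
    ((Fintype.card F ^ (Fintype.card μ + 1) - 1) * K) 0 hinner0
    (fun a ha => Finset.sum_eq_zero fun b _ => by
      show Nat.card (fib (-1:F) a b) = 0
      haveI := fib_skew_empty h2 a ha b
      simp)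
  rw [houter, mul_zero, add_zero]

lemma sym_rec :
    scnt (1:F) (Fin 1 ⊕ (Fin 1 ⊕ μ)) =
      (Fintype.card F ^ (Fintype.card μ + 1) - 1) *
          (Fintype.card F ^ (Fintype.card μ + 1) * scnt (1:F) μ)
        + (Fintype.card F - 1) *
          (Fintype.card F ^ (Fintype.card μ + 1) * scnt (1:F) (Fin 1 ⊕ μ)) := by
  classical
  have hε : (1:F) * 1 = 1 := by ring
  have hcard1 : Nat.card {x : F // (1:F) * x = x} = Fintype.card F := by
    rw [Nat.card_congr (Equiv.subtypeUnivEquiv fun x => one_mul x), Nat.card_eq_fintype_card]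
  have hcardV : Fintype.card ((Fin 1 ⊕ μ) → F) = Fintype.card F ^ (Fintype.card μ + 1) := by
    rw [Fintype.card_fun, Fintype.card_sum, Fintype.card_fin, add_comm]
  rw [card_split, Fintype.sum_prod_type]
  have hinner0 : (∑ b : (Fin 1 ⊕ μ) → F, Nat.card (fib (1:F) (0:F) b)) =
      (Fintype.card F ^ (Fintype.card μ + 1) - 1) *
        (Fintype.card F ^ (Fintype.card μ + 1) * scnt (1:F) μ) := by
    have := sum_split_zero (fun b : (Fin 1 ⊕ μ) → F => Nat.card (fib (1:F) (0:F) b)) 0 0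
      (Fintype.card F ^ (Fintype.card μ + 1) * scnt (1:F) μ)
      (by show Nat.card (fib (1:F) (0:F) (0 : (Fin 1 ⊕ μ) → F)) = 0
          haveI := fib_empty_of_zero (1:F) (ν := Fin 1 ⊕ μ); simp)
      (fun b hb => by
        show Nat.card (fib (1:F) (0:F) b) = _
        rw [card_fib_zero_row (1:F) hε b hb, hcard1, Nat.card_eq_fintype_card, Fintype.card_fun]
        ring)
    rw [this, zero_add, hcardV]
  have houter := sum_split_zero
    (fun a : F => ∑ b : (Fin 1 ⊕ μ) → F, Nat.card (fib (1:F) a b)) 0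
    ((Fintype.card F ^ (Fintype.card μ + 1) - 1) *
      (Fintype.card F ^ (Fintype.card μ + 1) * scnt (1:F) μ))
    (Fintype.card F ^ (Fintype.card μ + 1) * scnt (1:F) (Fin 1 ⊕ μ)) hinner0
    (fun a ha => by
      show (∑ b : (Fin 1 ⊕ μ) → F, Nat.card (fib (1:F) a b)) = _
      have hconst : (∑ b : (Fin 1 ⊕ μ) → F, Nat.card (fib (1:F) a b)) =
          ∑ _b : (Fin 1 ⊕ μ) → F, scnt (1:F) (Fin 1 ⊕ μ) :=
        Finset.sum_congr rfl fun b _ => card_fib_schur a ha b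
      rw [hconst, Finset.sum_const, Finset.card_univ, smul_eq_mul, hcardV])
  rw [houter]

end assembly

section final

def e1 (n : ℕ) : (Fin 1 ⊕ Fin n) ≃ Fin (n+1) := finSumFinEquiv.trans (finCongr (by omega))

def e2 (n : ℕ) : (Fin 1 ⊕ (Fin 1 ⊕ Fin n)) ≃ Fin (n+2) :=
  (Equiv.sumCongr (Equiv.refl (Fin 1)) (e1 n)).trans (e1 (n+1))

lemma skew_rec_fin (h2 : (2:F) ≠ 0) (n : ℕ) :
    scnt (-1:F) (Fin (n+2)) =
      (Fintype.card F ^ (n+1) - 1) * (Fintype.card F ^ n * scnt (-1:F) (Fin n)) := by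
  rw [← scnt_congr (-1:F) (e2 n), skew_rec h2]
  simp

lemma sym_rec_fin (n : ℕ) :
    scnt (1:F) (Fin (n+2)) =
      (Fintype.card F ^ (n+1) - 1) * (Fintype.card F ^ (n+1) * scnt (1:F) (Fin n))
      + (Fintype.card F - 1) * (Fintype.card F ^ (n+1) * scnt (1:F) (Fin (n+1))) := by
  rw [← scnt_congr (1:F) (e2 n), sym_rec, scnt_congr (1:F) (e1 n)]
  simp

lemma key (h2 : (2:F) ≠ 0) : ∀ m : ℕ,
    scnt (-1:F) (Fin (2*m+2)) = scnt (1:F) (Fin (2*m+1)) ∧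
    scnt (1:F) (Fin (2*m+2)) = Fintype.card F ^ (2*m+2) * scnt (1:F) (Fin (2*m+1)) := by
  have hq1 : 1 ≤ Fintype.card F := Fintype.card_pos
  intro m
  induction m with
  | zero =>
    constructor
    · rw [show 2*0+2 = 0+2 by ring, show 2*0+1 = 0+1 by ring,
        skew_rec_fin h2 0, scnt_zero, scnt_one_fin_one]
      simp
    · rw [show 2*0+2 = 0+2 by ring, show 2*0+1 = 0+1 by ring,
        sym_rec_fin 0, scnt_zero, scnt_one_fin_one]
      have hp1 : 1 ≤ Fintype.card F ^ (0+1) := Nat.one_le_pow _ _ hq1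
      zify [hq1, hp1]
      ring
  | succ m ih =>
    obtain ⟨ih1, ih2⟩ := ih
    have hp1 : 1 ≤ Fintype.card F ^ (2*m+2) := Nat.one_le_pow _ _ hq1
    have hp2 : 1 ≤ Fintype.card F ^ (2*m+3) := Nat.one_le_pow _ _ hq1
    have hp3 : 1 ≤ Fintype.card F ^ (2*m+1+1) := Nat.one_le_pow _ _ hq1
    have hp4 : 1 ≤ Fintype.card F ^ (2*m+2+1) := Nat.one_le_pow _ _ hq1
    have hs3 : scnt (1:F) (Fin (2*m+3)) =
        (Fintype.card F ^ (2*m+3) - 1) *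
          (Fintype.card F ^ (2*m+2) * scnt (1:F) (Fin (2*m+1))) := by
      have h := sym_rec_fin (F := F) (2*m+1)
      rw [show 2*m+1+2 = 2*m+3 by ring, show 2*m+1+1 = 2*m+2 by ring] at h
      rw [h, ih2]
      zify [hq1, hp1, hp2]
      ring
    constructor
    · rw [show 2*(m+1)+2 = (2*m+2)+2 by ring, show 2*(m+1)+1 = 2*m+3 by ring,
        skew_rec_fin h2 (2*m+2), ih1, hs3, show 2*m+2+1 = 2*m+3 by ring]
    · rw [show 2*(m+1)+2 = (2*m+2)+2 by ring, show 2*(m+1)+1 = 2*m+3 by ring,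
        sym_rec_fin (2*m+2), show 2*m+2+2 = 2*m+4 by ring, show 2*m+2+1 = 2*m+3 by ring,
        hs3, ih2]
      zify [hq1, hp1, hp2]
      ring

end final

end Stmt10Aux

theorem stmt10 (F : Type) [Field F] [Fintype F] (q : ℕ) (hq : Fintype.card F = q)
    (hodd : Odd q) (n : ℕ) (hn : 2 ≤ n) (he : Even n) :
    Nat.card {A : Matrix (Fin n) (Fin n) F // Aᵀ = -A ∧ IsUnit A} =
      Nat.card {A : Matrix (Fin (n - 1)) (Fin (n - 1)) F // A.IsSymm ∧ IsUnit A} := by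
  classical
  subst hq
  have h2 : (2:F) ≠ 0 := by
    intro h
    have hchar : ringChar F = 2 :=
      CharP.ringChar_of_prime_eq_zero Nat.prime_two (by exact_mod_cast h)
    have heven := FiniteField.even_card_iff_char_two.mp hchar
    obtain ⟨t, ht⟩ := hodd
    omega
  obtain ⟨k, hk⟩ := he
  have hk1 : 1 ≤ k := by omega
  have hL : Nat.card {A : Matrix (Fin n) (Fin n) F // Aᵀ = -A ∧ IsUnit A}
      = Stmt10Aux.scnt (-1:F) (Fin n) :=
    Nat.card_congr (Equiv.subtypeEquivRight fun A => by rw [neg_one_smul])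
  have hR : Nat.card {A : Matrix (Fin (n-1)) (Fin (n-1)) F // A.IsSymm ∧ IsUnit A}
      = Stmt10Aux.scnt (1:F) (Fin (n-1)) :=
    Nat.card_congr (Equiv.subtypeEquivRight fun A => by
      rw [one_smul]
      exact and_congr_left fun _ => Iff.rfl)
  rw [hL, hR]
  set m := k - 1 with hm
  have h1 : n = 2*m+2 := by omega
  have h2' : n - 1 = 2*m+1 := by omega
  rw [Stmt10Aux.scnt_congr (-1:F) (finCongr h1), Stmt10Aux.scnt_congr (1:F) (finCongr h2')]
  exact (Stmt10Aux.key h2 m).1
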